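/- arXiv:0809.3430 — 5 statements merged into one kernel-verified Lean document; each statement's English description precedes it below -/
import Mathlib

section
/- Let (A, ≤) be a well-founded partial order and let A₁, A₂ partition A. Let r denote ordinal height. Then r(A) ≤ r(A₁) ♯ r(A₂), where ♯ is the natural (Hessenberg) sum of ordinals. -/
universe u

namespace Ordinal

/-- Natural (Hessenberg) addition of ordinals, as in the older Mathlib's
`Mathlib/SetTheory/Ordinal/NaturalOps.lean`. -/
noncomputable def nadd (a b : Ordinal.{u}) : Ordinal.{u} :=
  max (⨆ x : Set.Iio a, Order.succ (nadd x.1 b)) (⨆ x : Set.Iio b, Order.succ (nadd a x.1))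
termination_by (a, b)
decreasing_by all_goals cases x; decreasing_tactic

end Ordinal

namespace NaturalOps

scoped infixl:65 " ♯ " => Ordinal.nadd

end NaturalOps

open scoped NaturalOps

namespace Ordinal

theorem nadd_lt_nadd_right {b c : Ordinal.{u}} (h : b < c) (a : Ordinal.{u}) : b ♯ a < c ♯ a := by
  rw [nadd.eq_1 c a]
  exact lt_of_lt_of_le (Order.lt_succ _)
    ((Ordinal.le_iSup (fun x : Set.Iio c => Order.succ (nadd x.1 a)) ⟨b, h⟩).trans (le_max_left _ _))

theorem nadd_lt_nadd_left {b c : Ordinal.{u}} (h : b < c) (a : Ordinal.{u}) : a ♯ b < a ♯ c := by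
  rw [nadd.eq_1 a c]
  exact lt_of_lt_of_le (Order.lt_succ _)
    ((Ordinal.le_iSup (fun x : Set.Iio c => Order.succ (nadd a x.1)) ⟨b, h⟩).trans (le_max_right _ _))

theorem nadd_le_nadd_right {b c : Ordinal.{u}} (h : b ≤ c) (a : Ordinal.{u}) : b ♯ a ≤ c ♯ a := by
  rcases lt_or_eq_of_le h with (h | rfl)
  · exact (nadd_lt_nadd_right h a).le
  · exact le_rfl

theorem nadd_le_nadd_left {b c : Ordinal.{u}} (h : b ≤ c) (a : Ordinal.{u}) : a ♯ b ≤ a ♯ c := by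
  rcases lt_or_eq_of_le h with (h | rfl)
  · exact (nadd_lt_nadd_left h a).le
  · exact le_rfl

theorem nadd_comm (a b : Ordinal.{u}) : a ♯ b = b ♯ a := by
  induction a using Ordinal.induction generalizing b with
  | _ a IHa =>
  induction b using Ordinal.induction with
  | _ b IHb =>
  rw [nadd.eq_1 a b, nadd.eq_1 b a, max_comm]
  congr 1
  · congr 1; funext x; rw [IHb x.1 x.2]
  · congr 1; funext x; rw [IHa x.1 x.2 b]

end Ordinal


/-- Supremum of `succ` of ranks of elements of `S` that are `≤ x`. -/
noncomputable def hbd {A : Type*} [PartialOrder A]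
    (hwf : WellFounded ((· < ·) : A → A → Prop)) (S : Set A) (x : A) : Ordinal :=
  ⨆ y : {y : S // (y : A) ≤ x},
    Order.succ (((InvImage.wf (Subtype.val : S → A) hwf).apply y.1).rank)

lemma hbd_mono {A : Type*} [PartialOrder A]
    (hwf : WellFounded ((· < ·) : A → A → Prop)) (S : Set A) {x y : A} (h : y ≤ x) :
    hbd hwf S y ≤ hbd hwf S x := by
  refine Ordinal.iSup_le fun z => ?_
  exact Ordinal.le_iSup (fun y : {y : S // (y : A) ≤ x} =>
    Order.succ (((InvImage.wf (Subtype.val : S → A) hwf).apply y.1).rank))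
    ⟨z.1, z.2.trans h⟩

lemma hbd_lt_of_lt {A : Type*} [PartialOrder A]
    (hwf : WellFounded ((· < ·) : A → A → Prop)) (S : Set A) {x y : A} (hx : x ∈ S)
    (h : y < x) :
    hbd hwf S y ≤ ((InvImage.wf (Subtype.val : S → A) hwf).apply ⟨x, hx⟩).rank := by
  refine Ordinal.iSup_le fun z => ?_
  rw [Order.succ_le_iff]
  exact ((InvImage.wf (Subtype.val : S → A) hwf).apply ⟨x, hx⟩).rank_lt_of_rel (z.2.trans_lt h)

lemma rank_lt_self_hbd {A : Type*} [PartialOrder A]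
    (hwf : WellFounded ((· < ·) : A → A → Prop)) (S : Set A) {x : A} (hx : x ∈ S) :
    ((InvImage.wf (Subtype.val : S → A) hwf).apply ⟨x, hx⟩).rank < hbd hwf S x := by
  rw [← Order.succ_le_iff]
  exact Ordinal.le_iSup (fun y : {y : S // (y : A) ≤ x} =>
    Order.succ (((InvImage.wf (Subtype.val : S → A) hwf).apply y.1).rank))
    ⟨⟨x, hx⟩, le_rfl⟩

lemma aux_step {A : Type*} [PartialOrder A]
    (hwf : WellFounded ((· < ·) : A → A → Prop)) (A₁ A₂ : Set A) {x : A} (hx : x ∈ A₁)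
    (IH : ∀ y, y < x → Order.succ ((hwf.apply y).rank) ≤ hbd hwf A₁ y ♯ hbd hwf A₂ y) :
    Order.succ ((hwf.apply x).rank) ≤ hbd hwf A₁ x ♯ hbd hwf A₂ x := by
  rw [Order.succ_le_iff]
  have h1 : (hwf.apply x).rank ≤
      ((InvImage.wf (Subtype.val : A₁ → A) hwf).apply ⟨x, hx⟩).rank ♯ hbd hwf A₂ x := by
    rw [(hwf.apply x).rank_eq]
    refine Ordinal.iSup_le fun y => ?_
    calc Order.succ ((hwf.apply y.1).rank) ≤ hbd hwf A₁ y.1 ♯ hbd hwf A₂ y.1 := IH y.1 y.2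
      _ ≤ ((InvImage.wf (Subtype.val : A₁ → A) hwf).apply ⟨x, hx⟩).rank ♯ hbd hwf A₂ x :=
        (Ordinal.nadd_le_nadd_right (hbd_lt_of_lt hwf A₁ hx y.2) _).trans
          (Ordinal.nadd_le_nadd_left (hbd_mono hwf A₂ y.2.le) _)
  exact h1.trans_lt (Ordinal.nadd_lt_nadd_right (rank_lt_self_hbd hwf A₁ hx) _)

/-- If a well-founded partial order `A` is partitioned into `A₁` and `A₂`, then the
ordinal height of `A` is at most the natural (Hessenberg) sum of the ordinal heights
of `A₁` and `A₂` (each with the restricted order). -/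
theorem height_le_nadd_of_partition {A : Type*} [PartialOrder A]
    (hwf : WellFounded ((· < ·) : A → A → Prop))
    (A₁ A₂ : Set A) (hunion : A₁ ∪ A₂ = Set.univ) (hdisj : Disjoint A₁ A₂) :
    (⨆ x : A, Order.succ ((hwf.apply x).rank)) ≤
      (⨆ x : A₁, Order.succ (((InvImage.wf (Subtype.val : A₁ → A) hwf).apply x).rank)) ♯
      (⨆ x : A₂, Order.succ (((InvImage.wf (Subtype.val : A₂ → A) hwf).apply x).rank)) := by
  have main : ∀ x : A, Order.succ ((hwf.apply x).rank) ≤ hbd hwf A₁ x ♯ hbd hwf A₂ x := by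
    intro x
    induction x using hwf.induction with
    | _ x IH =>
      have hx : x ∈ A₁ ∪ A₂ := hunion ▸ Set.mem_univ x
      rcases hx with hx | hx
      · exact aux_step hwf A₁ A₂ hx IH
      · have := aux_step hwf A₂ A₁ hx (fun y hy => by
          rw [Ordinal.nadd_comm]; exact IH y hy)
        rwa [Ordinal.nadd_comm] at this
  refine Ordinal.iSup_le fun x => (main x).trans ?_
  have h₁ : hbd hwf A₁ x ≤
      ⨆ x : A₁, Order.succ (((InvImage.wf (Subtype.val : A₁ → A) hwf).apply x).rank) :=
    Ordinal.iSup_le fun y => Ordinal.le_iSup _ y.1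
  have h₂ : hbd hwf A₂ x ≤
      ⨆ x : A₂, Order.succ (((InvImage.wf (Subtype.val : A₂ → A) hwf).apply x).rank) :=
    Ordinal.iSup_le fun y => Ordinal.le_iSup _ y.1
  exact (Ordinal.nadd_le_nadd_right h₁ _).trans (Ordinal.nadd_le_nadd_left h₂ _)
end

section
/- Let (M, ·) be a monoid whose elements are finite strings and whose multiplication satisfies |s·t| ≤ max{|s|,|t|} + C for all s,t ∈ M (for a fixed constant C). Then for every n ≥ 1 and all s₁,…,s_n ∈ M, |s₁·s₂·⋯·s_n| ≤ max{|s₁|,…,|s_n|} + C·⌈log₂(n)⌉. -/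
lemma length_prod_le_aux {Γ M : Type*} [Monoid M]
    (emb : M → List Γ) (C : ℕ)
    (hC : ∀ s t : M, (emb (s * t)).length ≤ max (emb s).length (emb t).length + C) :
    ∀ n : ℕ, ∀ l : List M, l.length = n → l ≠ [] → ∀ B : ℕ,
      (∀ x ∈ l, (emb x).length ≤ B) →
      (emb l.prod).length ≤ B + C * Nat.clog 2 n := by
  intro n
  induction n using Nat.strong_induction_on with
  | _ n ih =>
    intro l hl hne B hB
    rcases Nat.lt_or_ge n 2 with h2 | h2
    · -- n = 0 or 1; n = 0 impossible
      have hn0 : n ≠ 0 := by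
        intro h; subst h
        exact hne (List.length_eq_zero_iff.mp hl)
      have hn1 : n = 1 := by omega
      subst hn1
      obtain ⟨a, rfl⟩ := List.length_eq_one_iff.mp hl
      have : Nat.clog 2 1 = 0 := Nat.clog_one_right 2
      simp [this]
      exact hB a (by simp)
    · -- n ≥ 2
      set k := (n + 1) / 2 with hk
      have hk1 : 1 ≤ k := by omega
      have hkn : k < n := by omega
      have h1 : (l.take k).length = k := by
        rw [List.length_take, hl]; omega
      have h2' : (l.drop k).length = n - k := by
        rw [List.length_drop, hl]
      have hne1 : l.take k ≠ [] := by
        intro h; rw [h] at h1; simp at h1; omega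
      have hne2 : l.drop k ≠ [] := by
        intro h; rw [h] at h2'; simp at h2'; omega
      have hA := ih k hkn (l.take k) h1 hne1 B
        (fun x hx => hB x (List.mem_of_mem_take hx))
      have hB' := ih (n - k) (by omega) (l.drop k) h2' hne2 B
        (fun x hx => hB x (List.mem_of_mem_drop hx))
      have hclog : Nat.clog 2 n = Nat.clog 2 k + 1 := by
        have hkk : (n + 2 - 1) / 2 = k := by omega
        rw [Nat.clog_of_two_le (by norm_num) h2, hkk]
      have hmono : Nat.clog 2 (n - k) ≤ Nat.clog 2 k :=
        Nat.clog_mono_right 2 (by omega)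
      have hprod : l.prod = (l.take k).prod * (l.drop k).prod := by
        rw [← List.prod_append, List.take_append_drop]
      calc (emb l.prod).length
          = (emb ((l.take k).prod * (l.drop k).prod)).length := by rw [hprod]
        _ ≤ max (emb (l.take k).prod).length (emb (l.drop k).prod).length + C := hC _ _
        _ ≤ (B + C * Nat.clog 2 k) + C := by
            have : (emb (l.drop k).prod).length ≤ B + C * Nat.clog 2 k :=
              le_trans hB' (by have := Nat.mul_le_mul_left C hmono; omega)
            omega
        _ ≤ B + C * Nat.clog 2 n := by rw [hclog, Nat.mul_add]; omega

/-- Growth lemma for monoids: if the elements of a monoid `M` are (injectively encoded as)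
finite strings and `|s·t| ≤ max{|s|,|t|} + C`, then for all `n ≥ 1` and `s₁,…,sₙ ∈ M`,
`|s₁·s₂⋯sₙ| ≤ max{|s₁|,…,|sₙ|} + C·⌈log₂ n⌉`. -/
theorem length_prod_le_sup_add_clog {Γ M : Type*} [Monoid M]
    (emb : M → List Γ) (hemb : Function.Injective emb) (C : ℕ)
    (hC : ∀ s t : M, (emb (s * t)).length ≤ max (emb s).length (emb t).length + C)
    (n : ℕ) (hn : 1 ≤ n) (s : Fin n → M) :
    (emb (List.ofFn s).prod).length ≤
      (Finset.univ.sup fun i => (emb (s i)).length) + C * Nat.clog 2 n := by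
  apply length_prod_le_aux emb C hC n (List.ofFn s) List.length_ofFn
  · intro h
    have := congrArg List.length h
    simp at this
    omega
  · intro x hx
    obtain ⟨i, rfl⟩ := List.mem_ofFn.mp hx
    exact Finset.le_sup (f := fun j => (emb (s j)).length) (Finset.mem_univ i)
end

section
/- The free semigroup on two generators (e.g., ({0,1}⁺, concatenation)) admits no injective encoding of its elements as finite strings under which the length of a product is bounded by max of lengths of factors plus a constant; concretely, if |s·t| ≤ max{|s|,|t|} + C for all elements, then the set of elements generated from {0,1} in n+1 steps has size at most 2^{O(n)}, but the free semigroup generates at least 2^{2^n − 1} − 1 distinct elements in n+1 steps, a contradiction for large n. Hence the free semigroup on two generators is not word automatic. -/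
open FreeSemigroup

/-- Any element of the free semigroup can be split as a product with prescribed
length of the first factor. -/
private lemma fs_split (x : FreeSemigroup Bool) (p : ℕ) (hp : 0 < p)
    (hpx : p < x.length) : ∃ y z : FreeSemigroup Bool,
    x = y * z ∧ y.length = p ∧ z.length = x.length - p := by
  obtain ⟨a, l⟩ := x
  have hlen : (FreeSemigroup.mk a l).length = l.length + 1 := rfl
  have hl : p - 1 < l.length := by rw [hlen] at hpx; omega
  have hpl : p ≤ l.length := by omega
  refine ⟨⟨a, l.take (p-1)⟩, ⟨l[p-1], l.drop p⟩, ?_, ?_, ?_⟩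
  · have h2 : l.drop (p-1) = l[p-1] :: l.drop p := by
      have hp1 : p - 1 + 1 = p := by omega
      rw [List.drop_eq_getElem_cons hl, hp1]
    show FreeSemigroup.mk a l = FreeSemigroup.mk a (l.take (p-1) ++ l[p-1] :: l.drop p)
    rw [← h2, List.take_append_drop]
  · show (l.take (p-1)).length + 1 = p
    rw [List.length_take]
    omega
  · show (l.drop p).length + 1 = (FreeSemigroup.mk a l).length - p
    rw [List.length_drop, hlen]
    omega

private lemma fs_bound {k : ℕ} (C : ℕ) (e : FreeSemigroup Bool → List (Fin k))
    (he : ∀ s t : FreeSemigroup Bool,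
      (e (s * t)).length ≤ max (e s).length (e t).length + C) :
    ∀ n (x : FreeSemigroup Bool), x.length ≤ 2^n →
      (e x).length ≤ max (e (of true)).length (e (of false)).length + C * n := by
  intro n
  induction n with
  | zero =>
    intro x hx
    obtain ⟨a, l⟩ := x
    have hlen : (FreeSemigroup.mk a l).length = l.length + 1 := rfl
    rw [hlen] at hx
    have hl : l = [] := List.eq_nil_of_length_eq_zero (by omega)
    subst hl
    have : FreeSemigroup.mk a [] = of a := rfl
    rw [this]
    cases a
    · simp only [Nat.mul_zero, Nat.add_zero]; exact le_max_right (e (of true)).length (e (of false)).length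
    · simp only [Nat.mul_zero, Nat.add_zero]; exact le_max_left (e (of true)).length (e (of false)).length
  | succ n ih =>
    intro x hx
    have hmul : C * (n + 1) = C * n + C := by ring
    by_cases h : x.length ≤ 2^n
    · have := ih x h
      omega
    · push_neg at h
      obtain ⟨y, z, hxyz, hy, hz⟩ := fs_split x (2^n) (Nat.pow_pos (n := n) (by norm_num)) h
      have h2 : 2^(n+1) = 2^n + 2^n := by ring
      have hyl : y.length ≤ 2^n := le_of_eq hy
      have hzl : z.length ≤ 2^n := by omega
      have hy' := ih y hyl
      have hz' := ih z hzl
      have hprod := he y z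
      rw [← hxyz] at hprod
      omega

private lemma fs_lin (A B : ℕ) : ∃ n, A * n + B < 2^n := by
  refine ⟨4 * (A + B + 1), ?_⟩
  set s := A + B + 1 with hs
  have hA : A < s := by omega
  have hB : B < s := by omega
  have h1 : 2 * s < 2^(2*s) := Nat.lt_two_pow_self
  have h2 : (2*s)^2 < (2^(2*s))^2 := Nat.pow_lt_pow_left h1 (by norm_num)
  have h3 : (2^(2*s))^2 = 2^(4*s) := by rw [← pow_mul]; ring_nf
  have h5 : (A + 1) * (4*s) ≤ s * (4*s) := Nat.mul_le_mul_right _ (by omega)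
  nlinarith [h2, h3, h5, hB, hA]

/-- The free semigroup on two generators admits no injective encoding of its elements
as finite strings over a finite alphabet under which the length of a product is bounded
by the maximum of the lengths of the factors plus a constant.  (Hence the free semigroup
on two generators is not word automatic.) -/
theorem freeSemigroup_not_word_automatic :
    ¬ ∃ (k C : ℕ) (e : FreeSemigroup Bool → List (Fin k)),
        Function.Injective e ∧
        ∀ s t : FreeSemigroup Bool,
          (e (s * t)).length ≤ max (e s).length (e t).length + C := by
  rintro ⟨k, C, e, inj, he⟩
  set D := max (e (of true)).length (e (of false)).length with hD
  obtain ⟨n, hn⟩ := fs_lin (k * C) (k * (D + 1) + 2)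
  set N := D + C * n with hN
  set m := 2^n - 1 with hm
  have hpos : 1 ≤ 2^n := Nat.one_le_two_pow
  have key : ∀ f : Fin m → Bool, (e ⟨true, List.ofFn f⟩).length ≤ N := by
    intro f
    have hlen : (FreeSemigroup.mk true (List.ofFn f)).length = m + 1 := by
      show (List.ofFn f).length + 1 = m + 1
      rw [List.length_ofFn]
    have := fs_bound C e he n ⟨true, List.ofFn f⟩ (by rw [hlen]; omega)
    rwa [← hD, ← hN] at this
  let g : (Fin m → Bool) → (Fin (N+1) → Option (Fin k)) :=
    fun f i => (e ⟨true, List.ofFn f⟩)[(i : ℕ)]?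
  have ginj : Function.Injective g := by
    intro f1 f2 hfg
    have hle : e ⟨true, List.ofFn f1⟩ = e ⟨true, List.ofFn f2⟩ := by
      apply List.ext_getElem?
      intro i
      by_cases hi : i < N + 1
      · exact congrFun hfg ⟨i, hi⟩
      · rw [List.getElem?_eq_none (by have := key f1; omega),
            List.getElem?_eq_none (by have := key f2; omega)]
    have heq := inj hle
    have h2 : List.ofFn f1 = List.ofFn f2 := congrArg FreeSemigroup.tail heq
    exact List.ofFn_injective h2
  have hcard := Fintype.card_le_of_injective g ginj
  simp only [Fintype.card_fun, Fintype.card_fin, Fintype.card_bool,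
    Fintype.card_option] at hcard
  -- hcard : 2 ^ m ≤ (k + 1) ^ (N + 1)
  have h1 : (k+1)^(N+1) ≤ 2^(k*(N+1)) := by
    calc (k+1)^(N+1) ≤ (2^k)^(N+1) := Nat.pow_le_pow_left (Nat.lt_two_pow_self (n := k)) _
      _ = 2^(k*(N+1)) := by rw [← pow_mul]
  have h2 : k*(N+1) = k*C*n + k*(D+1) := by rw [hN]; ring
  have h3 : k*(N+1) < m := by omega
  have h4 : 2^(k*(N+1)) < 2^m := Nat.pow_lt_pow_right one_lt_two h3
  omega
end

section
/- If a tree has only countably many infinite paths, then its Cantor–Bendixson rank is 0 or a successor ordinal. -/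
/-- The infinite paths of the subtree induced on `S`: infinite chains contained in `S`
that are closed under predecessors within `S`. -/
def treePaths {A : Type*} [PartialOrder A] (S : Set A) : Set (Set A) :=
  {P | P ⊆ S ∧ (∀ x ∈ P, ∀ y ∈ P, x ≤ y ∨ y ≤ x) ∧
    (∀ x ∈ P, ∀ y ∈ S, y ≤ x → y ∈ P) ∧ P.Infinite}

/-- The Cantor–Bendixson derivative of a subtree `S`: the nodes of `S` lying on at
least two distinct infinite paths of `S`. -/
def treeDeriv {A : Type*} [PartialOrder A] (S : Set A) : Set A :=
  {x ∈ S | ∃ P ∈ treePaths S, ∃ Q ∈ treePaths S, P ≠ Q ∧ x ∈ P ∧ x ∈ Q}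

/-- Iterated derivative: `d^{α+1}(T) = d(d^α(T))`, intersection at limits. -/
noncomputable def treeDerivIter {A : Type*} [PartialOrder A] (α : Ordinal) : Set A :=
  Ordinal.limitRecOn α (Set.univ : Set A) (fun _ ih => treeDeriv ih)
    (fun o _ ih => ⋂ (β : Set.Iio o), ih β.1 β.2)

/-- The Cantor–Bendixson rank of the tree: the least `α` with
`d^α(T) = d^{α+1}(T)`. -/
noncomputable def treeCBrank (A : Type*) [PartialOrder A] : Ordinal :=
  sInf {α | treeDerivIter (A := A) α = treeDerivIter (A := A) (α + 1)}

section Aux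

variable {A : Type*} [PartialOrder A]

lemma treeDeriv_subset (S : Set A) : treeDeriv S ⊆ S := fun _ hx => hx.1

lemma treeDerivIter_zero : treeDerivIter (A := A) 0 = Set.univ :=
  Ordinal.limitRecOn_zero _ _ _

lemma treeDerivIter_succ (α : Ordinal) :
    treeDerivIter (A := A) (α + 1) = treeDeriv (treeDerivIter (A := A) α) := by
  rw [treeDerivIter, Ordinal.add_one_eq_succ, Ordinal.limitRecOn_succ]
  rfl

lemma treeDerivIter_limit {α : Ordinal} (h : Order.IsSuccLimit α) :
    treeDerivIter (A := A) α = ⋂ (β : Set.Iio α), treeDerivIter (A := A) β.1 := by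
  rw [treeDerivIter, Ordinal.limitRecOn_limit _ _ _ _ h]
  rfl

/-- The iterated derivatives form a decreasing chain. -/
lemma treeDerivIter_antitone {β γ : Ordinal} (hβγ : β ≤ γ) :
    treeDerivIter (A := A) γ ⊆ treeDerivIter (A := A) β := by
  induction γ using Ordinal.limitRecOn with
  | zero =>
    rw [nonpos_iff_eq_zero.1 hβγ]
  | add_one γ ih =>
    rcases hβγ.lt_or_eq with h' | h'
    · rw [treeDerivIter_succ]
      exact (treeDeriv_subset _).trans (ih (Order.lt_add_one_iff.1 h'))
    · rw [h']
  | limit γ hγ _ =>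
    rcases hβγ.lt_or_eq with h' | h'
    · rw [treeDerivIter_limit hγ]
      exact Set.iInter_subset (fun i : Set.Iio γ => treeDerivIter (A := A) i.1)
        (⟨β, h'⟩ : Set.Iio γ)
    · rw [h']

/-- The derivative of a downward closed set is downward closed. -/
lemma dc_treeDeriv {S : Set A} (hS : ∀ ⦃x y : A⦄, x ∈ S → y ≤ x → y ∈ S) :
    ∀ ⦃x y : A⦄, x ∈ treeDeriv S → y ≤ x → y ∈ treeDeriv S := by
  rintro x y ⟨hxS, P, hP, Q, hQ, hPQ, hxP, hxQ⟩ hyx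
  have hyS : y ∈ S := hS hxS hyx
  exact ⟨hyS, P, hP, Q, hQ, hPQ, hP.2.2.1 x hxP y hyS hyx, hQ.2.2.1 x hxQ y hyS hyx⟩

lemma dc_treeDerivIter (α : Ordinal) :
    ∀ ⦃x y : A⦄, x ∈ treeDerivIter (A := A) α → y ≤ x → y ∈ treeDerivIter (A := A) α := by
  induction α using Ordinal.limitRecOn with
  | zero =>
    rw [treeDerivIter_zero]
    intro x y _ _; trivial
  | add_one β ih =>
    rw [treeDerivIter_succ]
    exact dc_treeDeriv ih
  | limit β hβ ih =>
    rw [treeDerivIter_limit hβ]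
    intro x y hx hyx
    rw [Set.mem_iInter] at hx ⊢
    exact fun i => ih i.1 i.2 (hx i) hyx

/-- Paths of a downward closed subtree are paths of the whole tree. -/
lemma treePaths_subset_univ {S : Set A}
    (hS : ∀ ⦃x y : A⦄, x ∈ S → y ≤ x → y ∈ S) :
    treePaths S ⊆ treePaths (Set.univ : Set A) := by
  rintro P ⟨hPS, hchain, hclosed, hinf⟩
  exact ⟨Set.subset_univ _, hchain,
    fun x hx y _ hyx => hclosed x hx y (hS (hPS hx) hyx) hyx, hinf⟩

/-- Any path is countable, since all predecessor sets are finite. -/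
lemma path_countable (hfin : ∀ x : A, {y | y ≤ x}.Finite)
    {S P : Set A} (hP : P ∈ treePaths S) : P.Countable := by
  have key : ∀ x y : A, x < y → (hfin x).toFinset.card < (hfin y).toFinset.card := by
    intro x y hxy
    apply Finset.card_lt_card
    rw [Set.Finite.toFinset_ssubset_toFinset, Set.ssubset_def]
    constructor
    · exact fun z hz => le_trans hz hxy.le
    · intro hsub
      have hyx : y ≤ x := hsub (le_refl y)
      exact absurd hyx hxy.not_ge
  rw [Set.countable_iff_exists_injOn]
  refine ⟨fun x => (hfin x).toFinset.card, ?_⟩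
  intro x hx y hy hxy
  by_contra hne
  rcases hP.2.1 x hx y hy with h | h
  · exact absurd hxy (Nat.ne_of_lt (key x y (lt_of_le_of_ne h hne)))
  · exact absurd hxy.symm (Nat.ne_of_lt (key y x (lt_of_le_of_ne h (Ne.symm hne))))

/-- The first derivative of the whole tree is countable when there are only
countably many paths. -/
lemma treeDeriv_univ_countable (hfin : ∀ x : A, {y | y ≤ x}.Finite)
    (hcount : (treePaths (Set.univ : Set A)).Countable) :
    (treeDeriv (Set.univ : Set A)).Countable := by
  have hsub : treeDeriv (Set.univ : Set A) ⊆ ⋃₀ treePaths (Set.univ : Set A) := by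
    rintro x ⟨_, P, hP, _, _, _, hxP, _⟩
    exact ⟨P, hP, hxP⟩
  exact (hcount.sUnion fun t ht => path_countable hfin ht).mono hsub

/-- With countably many paths, the derivative process reaches a fixed point at some
ordinal stage (in every universe of ordinals). -/
lemma exists_fixed_stage (hfin : ∀ x : A, {y | y ≤ x}.Finite)
    (hcount : (treePaths (Set.univ : Set A)).Countable) :
    ∃ α : Ordinal, treeDerivIter (A := A) α = treeDerivIter (A := A) (α + 1) := by
  by_contra hc
  push_neg at hc
  have hx : ∀ β : Ordinal, ∃ x : A,
      x ∈ treeDerivIter (A := A) (β + 1) ∧ x ∉ treeDerivIter (A := A) (β + 1 + 1) := by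
    intro β
    have hsub : treeDerivIter (A := A) (β + 1 + 1) ⊆ treeDerivIter (A := A) (β + 1) := by
      rw [treeDerivIter_succ (β + 1)]
      exact treeDeriv_subset _
    obtain ⟨x, hx1, hx2⟩ := Set.exists_of_ssubset
      (hsub.ssubset_of_ne fun he => hc (β + 1) he.symm)
    exact ⟨x, hx1, hx2⟩
  choose f hf1 hf2 using hx
  have hcnt : (treeDeriv (Set.univ : Set A)).Countable := treeDeriv_univ_countable hfin hcount
  have hmem1 : ∀ β : Ordinal, f β ∈ treeDeriv (Set.univ : Set A) := by
    intro β
    have h1 : treeDerivIter (A := A) (β + 1) ⊆ treeDerivIter (A := A) ((0 : Ordinal) + 1) :=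
      treeDerivIter_antitone (add_le_add (zero_le : (0 : Ordinal) ≤ β) le_rfl)
    have h01 : treeDerivIter (A := A) ((0 : Ordinal) + 1) = treeDeriv (Set.univ : Set A) := by
      rw [treeDerivIter_succ, treeDerivIter_zero]
    exact h01 ▸ h1 (hf1 β)
  have hkey : ∀ β γ : Ordinal, β < γ → f β ≠ f γ := by
    intro β γ hlt he
    apply hf2 β
    rw [he]
    have h1 : β + 1 ≤ γ := by
      rw [Ordinal.add_one_eq_succ, Order.succ_le_iff]
      exact hlt
    exact treeDerivIter_antitone (add_le_add h1 le_rfl) (hf1 γ)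
  have hinj : Function.Injective
      (fun β : Ordinal => (⟨f β, hmem1 β⟩ : ↥(treeDeriv (Set.univ : Set A)))) := by
    intro β γ h
    have hfe : f β = f γ := congrArg Subtype.val h
    by_contra hne
    rcases lt_or_gt_of_ne hne with h' | h'
    · exact hkey _ _ h' hfe
    · exact hkey _ _ h' hfe.symm
  have := hcnt.to_subtype
  exact not_injective_of_ordinal _ hinj

/-- Distinct paths are incomparable as sets (using finiteness of predecessor sets). -/
lemma path_diff_nonempty {S : Set A} (hfin : ∀ x : A, {y | y ≤ x}.Finite)
    {P Q : Set A} (hP : P ∈ treePaths S) (hQ : Q ∈ treePaths S) (hne : P ≠ Q) :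
    (P \ Q).Nonempty := by
  rw [Set.diff_nonempty]
  intro hsub
  obtain ⟨q, hqQ, hqP⟩ := Set.not_subset.1 fun h => hne (Set.Subset.antisymm hsub h)
  have hall : ∀ p ∈ P, p ≤ q := by
    intro p hpP
    rcases hQ.2.1 p (hsub hpP) q hqQ with h | h
    · exact h
    · exact absurd (hP.2.2.1 p hpP q (hQ.1 hqQ) h) hqP
  exact hP.2.2.2 ((hfin q).subset fun p hp => hall p hp)

/-- In a subtree fixed by the derivative, every node splits into two
incomparable strict extensions. -/
lemma split_of_deriv_eq {S : Set A} (hfin : ∀ x : A, {y | y ≤ x}.Finite)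
    (h : treeDeriv S = S) {x : A} (hx : x ∈ S) :
    ∃ p, p ∈ S ∧ ∃ q, q ∈ S ∧ x < p ∧ x < q ∧ ¬p ≤ q ∧ ¬q ≤ p := by
  rw [← h] at hx
  obtain ⟨_, P, hP, Q, hQ, hPQ, hxP, hxQ⟩ := hx
  obtain ⟨p, hpP, hpQ⟩ := path_diff_nonempty hfin hP hQ hPQ
  obtain ⟨q, hqQ, hqP⟩ := path_diff_nonempty hfin hQ hP (Ne.symm hPQ)
  have hxp : x < p := by
    rcases hP.2.1 x hxP p hpP with h' | h'
    · exact lt_of_le_of_ne h' (fun he => hpQ (he ▸ hxQ))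
    · exact absurd (hQ.2.2.1 x hxQ p (hP.1 hpP) h') hpQ
  have hxq : x < q := by
    rcases hQ.2.1 x hxQ q hqQ with h' | h'
    · exact lt_of_le_of_ne h' (fun he => hqP (he ▸ hxP))
    · exact absurd (hP.2.2.1 x hxP q (hQ.1 hqQ) h') hqP
  refine ⟨p, hP.1 hpP, q, hQ.1 hqQ, hxp, hxq, ?_, ?_⟩
  · intro hle; exact hpQ (hQ.2.2.1 q hqQ p (hP.1 hpP) hle)
  · intro hle; exact hqP (hP.2.2.1 p hpP q (hQ.1 hqQ) hle)

/-- A nonempty subtree fixed by the derivative gives uncountably many paths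
(perfect set argument). -/
lemma not_countable_of_perfect {S : Set A}
    (hfin : ∀ x : A, {y | y ≤ x}.Finite)
    (hlin : ∀ x y z : A, y ≤ x → z ≤ x → y ≤ z ∨ z ≤ y)
    (hS : ∀ ⦃x y : A⦄, x ∈ S → y ≤ x → y ∈ S)
    (h : treeDeriv S = S) {x₀ : A} (hx₀ : x₀ ∈ S) :
    ¬ (treePaths (Set.univ : Set A)).Countable := by
  classical
  intro hcount
  -- choice of splitting successors
  have hsplit : ∀ x : {a : A // a ∈ S}, ∃ p q : {a : A // a ∈ S},
      x.1 < p.1 ∧ x.1 < q.1 ∧ ¬p.1 ≤ q.1 ∧ ¬q.1 ≤ p.1 := by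
    intro x
    obtain ⟨p, hp, q, hq, h1, h2, h3, h4⟩ := split_of_deriv_eq hfin h x.2
    exact ⟨⟨p, hp⟩, ⟨q, hq⟩, h1, h2, h3, h4⟩
  choose p q hp hq hpq hqp using hsplit
  -- the tree of nodes indexed by finite binary sequences
  let g : (ℕ → Bool) → ℕ → {a : A // a ∈ S} := fun a n =>
    Nat.rec ⟨x₀, hx₀⟩ (fun m ih => if a m then p ih else q ih) n
  have gsucc : ∀ a n, g a (n + 1) = if a n then p (g a n) else q (g a n) :=
    fun _ _ => rfl
  have gstep : ∀ a n, (g a n).1 < (g a (n + 1)).1 := by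
    intro a n
    rw [gsucc]
    by_cases hb : a n
    · rw [if_pos hb]; exact hp _
    · rw [if_neg hb]; exact hq _
  have gmono : ∀ a, StrictMono (fun n => (g a n).1) := fun a =>
    strictMono_nat_of_lt_succ (gstep a)
  have gagree : ∀ a b : ℕ → Bool, ∀ n, (∀ i < n, a i = b i) → g a n = g b n := by
    intro a b n
    induction n with
    | zero => intro _; rfl
    | succ m ih =>
      intro hab
      rw [gsucc, gsucc, ih fun i hi => hab i (Nat.lt_succ_of_lt hi),
        hab m (Nat.lt_succ_self m)]
  -- the path determined by a binary sequence
  let P : (ℕ → Bool) → Set A := fun a => {y | y ∈ S ∧ ∃ n, y ≤ (g a n).1}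
  have hPmem : ∀ a, P a ∈ treePaths S := by
    intro a
    refine ⟨fun y hy => hy.1, ?_, ?_, ?_⟩
    · rintro y ⟨_, m, hym⟩ z ⟨_, n, hzn⟩
      rcases le_total m n with hmn | hmn
      · exact hlin (g a n).1 y z (hym.trans ((gmono a).monotone hmn)) hzn
      · exact hlin (g a m).1 y z hym (hzn.trans ((gmono a).monotone hmn))
    · rintro y ⟨_, n, hyn⟩ z hzS hzy
      exact ⟨hzS, n, hzy.trans hyn⟩
    · exact Set.infinite_of_injective_forall_mem (f := fun n => (g a n).1)
        (gmono a).injective (fun n => ⟨(g a n).2, n, le_refl _⟩)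
  have hPinj : Function.Injective P := by
    intro a b hab
    by_contra hne
    have hex : ∃ n, a n ≠ b n := by
      by_contra hc; push_neg at hc; exact hne (funext hc)
    set n := Nat.find hex with hndef
    have hneq : a n ≠ b n := Nat.find_spec hex
    have hgn : g a n = g b n :=
      gagree a b n fun i hi => by
        by_contra hci; exact absurd (Nat.find_le hci) (not_le.2 hi)
    -- the two next nodes are incomparable
    have hinc : ¬(g a (n + 1)).1 ≤ (g b (n + 1)).1 ∧ ¬(g b (n + 1)).1 ≤ (g a (n + 1)).1 := by
      by_cases hav : a n = true
      · have hbv : ¬(b n = true) := fun hbv => hneq (hav.trans hbv.symm)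
        have e1 : g a (n + 1) = p (g a n) := by rw [gsucc, if_pos hav]
        have e2 : g b (n + 1) = q (g a n) := by rw [gsucc, if_neg hbv, ← hgn]
        rw [e1, e2]
        exact ⟨hpq _, hqp _⟩
      · have hbv : b n = true := by
          cases hbv : b n
          · exact absurd rfl (by rw [← Bool.not_eq_true] at hbv ⊢ <;>
              exact fun _ => hneq (by rw [Bool.not_eq_true] at hav hbv; rw [hav, hbv]))
          · rfl
        have e1 : g a (n + 1) = q (g a n) := by rw [gsucc, if_neg hav]
        have e2 : g b (n + 1) = p (g a n) := by rw [gsucc, if_pos hbv, ← hgn]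
        rw [e1, e2]
        exact ⟨hqp _, hpq _⟩
    -- but g b (n+1) ∈ P b = P a, forcing comparability
    have hmem' : (g b (n + 1)).1 ∈ P a := by
      rw [hab]
      exact ⟨(g b (n + 1)).2, n + 1, le_refl _⟩
    obtain ⟨_, m, hm⟩ := hmem'
    rcases le_total m (n + 1) with hmn | hmn
    · exact hinc.2 (hm.trans ((gmono a).monotone hmn))
    · rcases hlin (g a m).1 (g a (n + 1)).1 (g b (n + 1)).1
        ((gmono a).monotone hmn) hm with h' | h'
      · exact hinc.1 h'
      · exact hinc.2 h'
  -- uncountability of the family of paths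
  have h1 : (Set.range P).Countable :=
    hcount.mono (Set.range_subset_iff.2 fun a => treePaths_subset_univ hS (hPmem a))
  have := h1.to_subtype
  have hcnt : Countable (ℕ → Bool) :=
    Countable.of_equiv _ (Equiv.ofInjective P hPinj).symm
  obtain ⟨i, hi⟩ := Countable.exists_injective_nat (ℕ → Bool)
  apply Function.cantor_injective (fun s : Set ℕ => i (fun k => decide (k ∈ s)))
  intro s t hst
  have hfun := hi hst
  ext k
  exact decide_eq_decide.mp (congrFun hfun k)

end Aux

/-- If a (partial order) tree — a partial order with a least element whose predecessor
sets are finite and linearly ordered — has only countably many infinite paths, then its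
Cantor–Bendixson rank is `0` or a successor ordinal. -/
theorem treeCBrank_zero_or_succ_of_countable_paths {A : Type*} [PartialOrder A]
    (r : A) (hr : ∀ x, r ≤ x)
    (hfin : ∀ x : A, {y | y ≤ x}.Finite)
    (hlin : ∀ x y z : A, y ≤ x → z ≤ x → y ≤ z ∨ z ≤ y)
    (hcount : (treePaths (Set.univ : Set A)).Countable) :
    treeCBrank A = 0 ∨ ∃ β : Ordinal, treeCBrank A = β + 1 := by
  by_cases hD : treeDeriv (Set.univ : Set A) = Set.univ
  · left
    have h0 : (0 : Ordinal) ∈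
        {α | treeDerivIter (A := A) α = treeDerivIter (A := A) (α + 1)} := by
      show treeDerivIter (A := A) 0 = treeDerivIter (A := A) (0 + 1)
      rw [treeDerivIter_zero, treeDerivIter_succ, treeDerivIter_zero, hD]
    exact le_antisymm (csInf_le (OrderBot.bddBelow _) h0) zero_le
  · right
    have hne : ({α | treeDerivIter (A := A) α = treeDerivIter (A := A) (α + 1)}
        : Set Ordinal).Nonempty := exists_fixed_stage hfin hcount
    have hmem : treeCBrank A ∈
        {α | treeDerivIter (A := A) α = treeDerivIter (A := A) (α + 1)} :=
      csInf_mem hne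
    rcases Ordinal.zero_or_succ_or_isSuccLimit (treeCBrank A) with h0 | hs | hl
    · exfalso
      apply hD
      have := hmem
      rw [h0] at this
      have h01 : treeDerivIter (A := A) 0 = treeDerivIter (A := A) (0 + 1) := this
      rw [treeDerivIter_zero, treeDerivIter_succ, treeDerivIter_zero] at h01
      exact h01.symm
    · obtain ⟨a, ha⟩ := hs
      exact ⟨a, by rw [← ha, Ordinal.add_one_eq_succ]⟩
    · exfalso
      have hfix : treeDeriv (treeDerivIter (A := A) (treeCBrank A)) =
          treeDerivIter (A := A) (treeCBrank A) := by
        rw [← treeDerivIter_succ]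
        exact hmem.symm
      have hrK : r ∈ treeDerivIter (A := A) (treeCBrank A) := by
        rw [treeDerivIter_limit hl, Set.mem_iInter]
        rintro ⟨β, hβ⟩
        have hβlt : β < treeCBrank A := hβ
        have hβne : treeDerivIter (A := A) β ≠ treeDerivIter (A := A) (β + 1) := by
          intro he
          exact absurd hβlt (not_lt.2 (csInf_le (OrderBot.bddBelow _) he))
        rcases Set.eq_empty_or_nonempty (treeDerivIter (A := A) β) with he | hne2
        · exfalso
          apply hβne
          rw [treeDerivIter_succ, he]
          exact (Set.subset_empty_iff.1 (he ▸ treeDeriv_subset (treeDerivIter (A := A) β) :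
            treeDeriv (∅ : Set A) ⊆ ∅)).symm
        · obtain ⟨x, hx⟩ := hne2
          exact dc_treeDerivIter β hx (hr x)
      exact not_countable_of_perfect hfin hlin (dc_treeDerivIter (treeCBrank A))
        hfix hrK hcount
end

section
/- There is no Borel function F : P(ℕ) → {0,1}^ℕ such that for all X, Y ⊆ ℕ: X =* Y if and only if F(X) = F(Y), where X =* Y means X and Y differ in only finitely many points. -/
open MeasureTheory Set
open scoped ENNReal

local instance : AddCommGroup Bool where
  add := xor
  zero := false
  neg := id
  add_assoc := by decide
  zero_add := by decide
  add_zero := by decide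
  neg_add_cancel := by decide
  add_comm := by decide
  nsmul := nsmulRec
  zsmul := zsmulRec

local instance : ContinuousAdd Bool := ⟨continuous_of_discreteTopology⟩
local instance : ContinuousNeg Bool := ⟨continuous_of_discreteTopology⟩

local notation "G" => (ℕ → Bool)

noncomputable def mu : Measure G := Measure.addHaarMeasure (⊤ : TopologicalSpace.PositiveCompacts G)

noncomputable local instance : mu.IsAddLeftInvariant := by unfold mu; infer_instance

local instance : IsProbabilityMeasure mu := by
  constructor
  rw [← TopologicalSpace.PositiveCompacts.coe_top (α := G), mu, Measure.addHaarMeasure_self]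

lemma bool_swap1 : ∀ x y : Bool, (!x) = y → x = !y := by decide
lemma bool_swap2 : ∀ x y : Bool, x = !y → (!x) = y := by decide
lemma bool_ne_not : ∀ b : Bool, b = !b → False := by decide

/-- the cylinder set -/
def cyl (S : Finset ℕ) (v : ℕ → Bool) : Set G := {X | ∀ n ∈ S, X n = v n}

lemma measurableSet_cyl (S : Finset ℕ) (v : ℕ → Bool) : MeasurableSet (cyl S v) := by
  have : cyl S v = ⋂ n ∈ S, (fun X : G => X n) ⁻¹' {v n} := by
    ext X; simp [cyl]
  rw [this]
  exact MeasurableSet.biInter S.countable_toSet fun n _ =>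
    (measurable_pi_apply n) (measurableSet_singleton _)

/-- the flip at coordinate `a` -/
def flip1 (a : ℕ) : G := fun n => n = a


lemma add_apply' (x y : G) (n : ℕ) : (x + y) n = xor (x n) (y n) := rfl

lemma flip_add_apply (a : ℕ) (X : G) (n : ℕ) :
    (flip1 a + X) n = if n = a then !(X n) else X n := by
  rw [add_apply']
  unfold flip1
  by_cases h : n = a <;> simp [h]

lemma mu_cyl (S : Finset ℕ) (v : ℕ → Bool) : mu (cyl S v) = (1/2) ^ S.card := by
  induction S using Finset.induction generalizing v with
  | empty => simp [cyl]
  | @insert a S ha ih =>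
    have hins : cyl (insert a S) v = cyl S v ∩ {X : G | X a = v a} := by
      ext X
      simp only [cyl, Finset.mem_insert, mem_setOf_eq, mem_inter_iff]
      constructor
      · intro h; exact ⟨fun n hn => h n (Or.inr hn), h a (Or.inl rfl)⟩
      · rintro ⟨h1, h2⟩ n (rfl | hn)
        · exact h2
        · exact h1 n hn
    have key : mu (cyl S v ∩ {X : G | X a = v a}) = mu (cyl S v ∩ {X : G | X a = !(v a)}) := by
      have hpre : (flip1 a + ·) ⁻¹' (cyl S v ∩ {X : G | X a = v a})
          = cyl S v ∩ {X : G | X a = !(v a)} := by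
        ext X
        simp only [mem_preimage, mem_inter_iff, mem_setOf_eq, cyl, flip_add_apply]
        constructor
        · rintro ⟨h1, h2⟩
          refine ⟨fun n hn => ?_, ?_⟩
          · have := h1 n hn
            rw [if_neg (by rintro rfl; exact ha hn)] at this
            exact this
          · simp only [if_true] at h2
            exact bool_swap1 _ _ h2
        · rintro ⟨h1, h2⟩
          refine ⟨fun n hn => ?_, ?_⟩
          · rw [if_neg (by rintro rfl; exact ha hn)]
            exact h1 n hn
          · simp only [if_true]
            exact bool_swap2 _ _ h2
      rw [← hpre, measure_preimage_add]
    have hsplit : cyl S v = (cyl S v ∩ {X : G | X a = v a}) ∪ (cyl S v ∩ {X : G | X a = !(v a)}) := by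
      ext X
      simp only [mem_union, mem_inter_iff, mem_setOf_eq]
      constructor
      · intro h
        cases hx : X a <;> cases hv : v a <;> simp_all
      · rintro (⟨h, _⟩ | ⟨h, _⟩) <;> exact h
    have hdisj : Disjoint (cyl S v ∩ {X : G | X a = v a}) (cyl S v ∩ {X : G | X a = !(v a)}) := by
      rw [Set.disjoint_left]
      rintro X ⟨-, h1⟩ ⟨-, h2⟩
      simp only [mem_setOf_eq] at h1 h2
      rw [h1] at h2
      exact bool_ne_not _ h2
    have hmeas2 : MeasurableSet (cyl S v ∩ {X : G | X a = !(v a)}) := by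
      refine (measurableSet_cyl S v).inter ?_
      exact (measurable_pi_apply a) (measurableSet_singleton _)
    have hsum : mu (cyl S v) = mu (cyl S v ∩ {X : G | X a = v a})
        + mu (cyl S v ∩ {X : G | X a = !(v a)}) := by
      conv_lhs => rw [hsplit]
      exact measure_union hdisj hmeas2
    rw [← key] at hsum
    rw [ih] at hsum
    have h2 : (2 : ℝ≥0∞) * mu (cyl (insert a S) v) = (1/2 : ℝ≥0∞) ^ S.card := by
      rw [hins, two_mul]; exact hsum.symm
    have : mu (cyl (insert a S) v) = (1/2 : ℝ≥0∞) * ((1/2 : ℝ≥0∞) ^ S.card) := by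
      rw [← h2, ← mul_assoc, one_div, ENNReal.inv_mul_cancel two_ne_zero ENNReal.ofNat_ne_top,
        one_mul]
    rw [this, Finset.card_insert_of_notMem ha, pow_succ]
    ring

noncomputable def sAlg (n : ℕ) : MeasurableSpace G := MeasurableSpace.comap (fun X : G => X n) ⊤

lemma sAlg_le (n : ℕ) : sAlg n ≤ MeasurableSpace.pi :=
  (measurable_pi_apply n).comap_le

def piSys (n : ℕ) : Set (Set G) := {s | ∃ b : Bool, s = (fun X : G => X n) ⁻¹' {b}}

lemma isPiSystem_piSys (n : ℕ) : IsPiSystem (piSys n) := by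
  rintro s ⟨b, rfl⟩ t ⟨c, rfl⟩ hne
  rcases eq_or_ne b c with rfl | h
  · exact ⟨b, by simp⟩
  · exfalso
    obtain ⟨X, hX1, hX2⟩ := hne
    simp only [mem_preimage, mem_singleton_iff] at hX1 hX2
    exact h (hX1 ▸ hX2 ▸ rfl)

lemma sAlg_eq (n : ℕ) : sAlg n = MeasurableSpace.generateFrom (piSys n) := by
  apply le_antisymm
  · rintro s ⟨t, -, rfl⟩
    have ht : t = ⋃ b ∈ t, {b} := (Set.biUnion_of_singleton t).symm
    rw [ht, Set.preimage_iUnion₂]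
    exact MeasurableSet.biUnion t.to_countable fun b _ =>
      MeasurableSpace.measurableSet_generateFrom ⟨b, rfl⟩
  · rw [MeasurableSpace.generateFrom_le_iff]
    rintro s ⟨b, rfl⟩
    exact ⟨{b}, trivial, rfl⟩

lemma indep_sAlg : ProbabilityTheory.iIndep sAlg mu := by
  refine ProbabilityTheory.iIndepSets.iIndep sAlg_le piSys isPiSystem_piSys sAlg_eq ?_
  rw [ProbabilityTheory.iIndepSets_iff]
  intro S f hf
  classical
  set v : ℕ → Bool := fun n => if h : n ∈ S then (hf n h).choose else false with hv
  have hfv : ∀ n ∈ S, f n = (fun X : G => X n) ⁻¹' {v n} := by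
    intro n hn
    have := (hf n hn).choose_spec
    rw [hv]
    simp only [dif_pos hn]
    exact this
  have hInter : ⋂ n ∈ S, f n = cyl S v := by
    ext X
    simp only [mem_iInter, cyl, mem_setOf_eq]
    constructor
    · intro h n hn
      have := h n hn
      rw [hfv n hn] at this
      exact this
    · intro h n hn
      rw [hfv n hn]
      exact h n hn
  rw [hInter, mu_cyl]
  have : ∀ n ∈ S, mu (f n) = (1/2 : ℝ≥0∞) := by
    intro n hn
    have : f n = cyl {n} v := by
      rw [hfv n hn]
      ext X
      simp [cyl]
    rw [this, mu_cyl]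
    simp
  rw [Finset.prod_congr rfl this, Finset.prod_const]

/-- tail measurability of invariant sets -/
lemma tail_measurable (A : Set G) (hA : MeasurableSet A)
    (hinv : ∀ X Y : G, {n | X n ≠ Y n}.Finite → (X ∈ A ↔ Y ∈ A)) :
    MeasurableSet[Filter.limsup sAlg Filter.atTop] A := by
  rw [Filter.limsup_eq_iInf_iSup_of_nat, MeasurableSpace.measurableSet_iInf]
  intro n
  classical
  set proj : G → ({i : ℕ // n ≤ i} → Bool) := fun X j => X j with hproj
  set ext : ({i : ℕ // n ≤ i} → Bool) → G := fun y i => if h : n ≤ i then y ⟨i, h⟩ else false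
    with hext
  have hextm : Measurable ext := by
    rw [measurable_pi_iff]
    intro i
    by_cases h : n ≤ i
    · simp only [hext, dif_pos h]
      exact measurable_pi_apply _
    · simp only [hext, dif_neg h]
      exact measurable_const
  have hB : MeasurableSet (ext ⁻¹' A) := hextm hA
  have hprojm : Measurable[⨆ i ≥ n, sAlg i] proj := by
    simp_rw [measurable_iff_comap_le, MeasurableSpace.pi, MeasurableSpace.comap_iSup,
      MeasurableSpace.comap_comp, Function.comp_def, iSup_le_iff]
    intro j
    show sAlg (j : ℕ) ≤ _
    exact le_iSup_of_le (j : ℕ) (le_iSup_of_le j.2 le_rfl)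
  have hAeq : A = proj ⁻¹' (ext ⁻¹' A) := by
    ext X
    have hdiff : {i | (ext (proj X)) i ≠ X i}.Finite := by
      apply (Set.finite_Iio n).subset
      intro i hi
      simp only [mem_setOf_eq, hext, hproj] at hi
      by_contra hni
      simp only [Set.mem_Iio, not_lt] at hni
      rw [dif_pos hni] at hi
      exact hi rfl
    have := hinv (ext (proj X)) X hdiff
    simp only [mem_preimage]
    exact this.symm
  rw [hAeq]
  exact hprojm hB

lemma mu_zero_or_one (A : Set G) (hA : MeasurableSet A)
    (hinv : ∀ X Y : G, {n | X n ≠ Y n}.Finite → (X ∈ A ↔ Y ∈ A)) :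
    mu A = 0 ∨ mu A = 1 :=
  ProbabilityTheory.measure_zero_or_one_of_measurableSet_limsup_atTop sAlg_le indep_sAlg
    (tail_measurable A hA hinv)

lemma mu_singleton (Y : G) : mu {Y} = 0 := by
  have hle : ∀ n : ℕ, mu {Y} ≤ (1/2 : ℝ≥0∞) ^ n := by
    intro n
    have : {Y} ⊆ cyl (Finset.range n) Y := by
      rintro X rfl
      intro m _
      rfl
    calc mu {Y} ≤ mu (cyl (Finset.range n) Y) := measure_mono this
    _ = (1/2 : ℝ≥0∞) ^ n := by rw [mu_cyl, Finset.card_range]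
  have htend : Filter.Tendsto (fun n : ℕ => (1/2 : ℝ≥0∞) ^ n) Filter.atTop (nhds 0) :=
    ENNReal.tendsto_pow_atTop_nhds_zero_of_lt_one (by norm_num)
  have := ge_of_tendsto htend (Filter.Eventually.of_forall hle)
  exact le_antisymm this zero_le

noncomputable local instance : MeasureTheory.NullSingletonClass mu := ⟨mu_singleton⟩

lemma bool_ne_eq_not : ∀ a b : Bool, a ≠ b → a = !b := by decide
lemma bool_ne_false_eq : ∀ a : Bool, a ≠ false → a = true := by decide

/-- There is no Borel function `F : P(ℕ) → {0,1}^ℕ` (with `P(ℕ)` identified with Cantor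
space `ℕ → Bool` with the product topology) such that `X =* Y ↔ F X = F Y`, where
`X =* Y` means `X` and `Y` differ in only finitely many points.  Borel means measurable
with respect to the Borel σ-algebras of the topology. -/
theorem no_borel_reduction_of_eqStar :
    ¬ ∃ F : (ℕ → Bool) → (ℕ → Bool),
      @Measurable _ _ (borel (ℕ → Bool)) (borel (ℕ → Bool)) F ∧
      ∀ X Y : ℕ → Bool, {n | X n ≠ Y n}.Finite ↔ F X = F Y := by
  classical
  rintro ⟨F, hFm', hF⟩
  have hFm : Measurable F := by
    rw [BorelSpace.measurable_eq (α := ℕ → Bool)]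
    exact hFm'
  set A : ℕ → Set G := fun k => {X : G | F X k = true} with hA
  have hAm : ∀ k, MeasurableSet (A k) := fun k =>
    hFm ((measurable_pi_apply k) (measurableSet_singleton true))
  have hAinv : ∀ k, ∀ X Y : G, {n | X n ≠ Y n}.Finite → (X ∈ A k ↔ Y ∈ A k) := by
    intro k X Y hfin
    have : F X = F Y := (hF X Y).mp hfin
    simp only [hA, mem_setOf_eq, this]
  set z : ℕ → Bool := fun k => if mu (A k) = 1 then true else false with hz
  have hCk : ∀ k, mu {X : G | F X k ≠ z k} = 0 := by
    intro k
    rcases mu_zero_or_one (A k) (hAm k) (hAinv k) with h0 | h1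
    · have hzk : z k = false := by
        rw [hz]
        simp only [h0]
        norm_num
      have : {X : G | F X k ≠ z k} = A k := by
        ext X
        simp only [hzk, mem_setOf_eq, hA]
        exact ⟨fun h => bool_ne_false_eq _ h, fun h => by simp [h]⟩
      rw [this, h0]
    · have hzk : z k = true := by rw [hz]; simp only [h1, if_true]
      have : {X : G | F X k ≠ z k} = (A k)ᶜ := by
        ext X
        simp [hzk, hA]
      rw [this, measure_compl (hAm k) (measure_ne_top mu _), h1, measure_univ, tsub_self]
  have hbad : mu (⋃ k, {X : G | F X k ≠ z k}) = 0 := measure_iUnion_null hCk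
  set C : Set G := F ⁻¹' {z} with hC
  have hCcompl : C = (⋃ k, {X : G | F X k ≠ z k})ᶜ := by
    ext X
    simp only [hC, mem_preimage, mem_singleton_iff, compl_iUnion, mem_iInter, mem_compl_iff,
      mem_setOf_eq, not_not, funext_iff]
  have hC1 : (1 : ℝ≥0∞) ≤ mu C := by
    have := measure_union_le (μ := mu) (⋃ k, {X : G | F X k ≠ z k}) C
    rw [hCcompl] at this ⊢
    rw [Set.union_compl_self] at this
    rw [measure_univ, hbad, zero_add] at this
    exact this
  have hCne : C.Nonempty := by
    refine nonempty_of_measure_ne_zero (μ := mu) ?_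
    intro h
    rw [h] at hC1
    exact (by norm_num : ¬ (1 : ℝ≥0∞) ≤ 0) hC1
  obtain ⟨X₀, hX₀⟩ := hCne
  set g : Finset ℕ → G := fun s n => if n ∈ s then !(X₀ n) else X₀ n with hg
  have hsub : C ⊆ Set.range g := by
    intro Y hY
    have hFY : F Y = z := hY
    have hFX₀ : F X₀ = z := hX₀
    have hfin : {n | Y n ≠ X₀ n}.Finite := (hF Y X₀).mpr (hFX₀ ▸ hFY)
    refine ⟨hfin.toFinset, ?_⟩
    funext n
    show (if n ∈ hfin.toFinset then !(X₀ n) else X₀ n) = Y n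
    by_cases h : Y n ≠ X₀ n
    · rw [if_pos (by simpa using h)]
      exact (bool_ne_eq_not _ _ h).symm
    · rw [if_neg (by simpa using h)]
      push_neg at h
      exact h.symm
  have hzero : mu C = 0 :=
    measure_mono_null hsub ((Set.countable_range g).measure_zero mu)
  rw [hzero] at hC1
  exact (by norm_num : ¬ (1 : ℝ≥0∞) ≤ 0) hC1
end
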